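/- Let $e(k) = \mathbb{E}_x[x_1 \cdots x_k]$ where $x$ is uniform on the slice $\{x \in \{\pm 1\}^n : \sum_i x_i = \sqrt{n}\}$ (with $n$ a perfect square making the slice nonempty). Then for all $k \geq 1$, $|e(k)| \leq k^{3k} \cdot n^{-k/2}$. -/

import Mathlib

open Finset

private theorem stmt11_card_not_mem {α : Type*} [Fintype α] [DecidableEq α] {s t : Finset α}
    (h : s.card = t.card) : Fintype.card {a // ¬ a ∈ s} = Fintype.card {a // ¬ a ∈ t} := by
  have key : ∀ u : Finset α, Fintype.card {a // ¬ a ∈ u} = Fintype.card α - u.card := by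
    intro u
    rw [Fintype.card_subtype]
    have : filter (fun x => x ∉ u) univ = uᶜ := by ext x; simp
    rw [this, Finset.card_compl]
  rw [key, key, h]

private noncomputable def stmt11_permOf {α : Type*} [Fintype α] [DecidableEq α] {s t : Finset α}
    (h : s.card = t.card) : Equiv.Perm α :=
  (Equiv.sumCompl (· ∈ s)).symm.trans
    (((Finset.equivOfCardEq h).sumCongr
        (Fintype.equivOfCardEq (stmt11_card_not_mem h))).trans
      (Equiv.sumCompl (· ∈ t)))

private theorem stmt11_exists_perm_image {α : Type*} [Fintype α] [DecidableEq α]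
    {s t : Finset α} (h : s.card = t.card) : ∃ σ : Equiv.Perm α, s.image σ = t := by
  refine ⟨stmt11_permOf h, ?_⟩
  have hmem : ∀ a ∈ s, stmt11_permOf h a ∈ t := by
    intro a ha
    simp only [stmt11_permOf, Equiv.trans_apply, Equiv.sumCompl_symm_apply_of_pos ha,
      Equiv.sumCongr_apply, Sum.map_inl, Equiv.sumCompl_apply_inl]
    exact ((Finset.equivOfCardEq h) ⟨a, ha⟩).2
  have hsub : s.image (stmt11_permOf h) ⊆ t := by
    intro b hb
    obtain ⟨a, ha, rfl⟩ := Finset.mem_image.mp hb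
    exact hmem a ha
  apply Finset.eq_of_subset_of_card_le hsub
  rw [Finset.card_image_of_injective _ (stmt11_permOf h).injective]
  exact le_of_eq h.symm

private def stmt11_FF {n : ℕ} (S : Finset (Fin n → Bool)) (T : Finset (Fin n)) : ℝ :=
  ∑ s ∈ S, ∏ j ∈ T, (if s j then (1:ℝ) else -1)

private def stmt11_Tt (n t : ℕ) : Finset (Fin n) :=
  Finset.univ.filter (fun i : Fin n => i.val < t)

private theorem stmt11_card_Tt (n t : ℕ) (h : t ≤ n) : (stmt11_Tt n t).card = t := by
  unfold stmt11_Tt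
  rw [show (Finset.univ.filter fun i : Fin n => i.val < t)
      = (Finset.range t).attachFin (fun m hm => lt_of_lt_of_le (Finset.mem_range.mp hm) h) from by
    ext i; simp [Finset.mem_attachFin]]
  rw [Finset.card_attachFin, Finset.card_range]

private theorem stmt11_mem_S_comp {n : ℕ} {S : Finset (Fin n → Bool)}
    (hS : S = Finset.univ.filter fun s =>
      (∑ i, (if s i then (1 : ℝ) else -1)) = Real.sqrt n)
    (σ : Equiv.Perm (Fin n)) (s : Fin n → Bool) : s ∘ σ ∈ S ↔ s ∈ S := by
  subst hS
  simp only [mem_filter, mem_univ, true_and, Function.comp]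
  rw [Equiv.sum_comp σ (fun i => if s i then (1:ℝ) else -1)]

private theorem stmt11_FF_image {n : ℕ} {S : Finset (Fin n → Bool)}
    (hS : S = Finset.univ.filter fun s =>
      (∑ i, (if s i then (1 : ℝ) else -1)) = Real.sqrt n)
    (T : Finset (Fin n)) (σ : Equiv.Perm (Fin n)) :
    stmt11_FF S (T.image σ) = stmt11_FF S T := by
  unfold stmt11_FF
  have h1 : ∀ s : Fin n → Bool, ∏ j ∈ T.image σ, (if s j then (1:ℝ) else -1)
      = ∏ j ∈ T, (if (s ∘ σ) j then (1:ℝ) else -1) := by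
    intro s
    rw [Finset.prod_image (fun a _ b _ h => σ.injective h)]
    rfl
  simp_rw [h1]
  apply Finset.sum_nbij' (i := fun s => s ∘ σ) (j := fun s => s ∘ σ.symm)
  · intro s hs; exact (stmt11_mem_S_comp hS σ s).mpr hs
  · intro s hs
    apply (stmt11_mem_S_comp hS σ (s ∘ σ.symm)).mp
    have : (s ∘ ⇑σ.symm) ∘ ⇑σ = s := by funext a; simp
    rwa [this]
  · intro s _; funext a; simp
  · intro s _; funext a; simp
  · intro s _; rfl

private theorem stmt11_FF_card {n : ℕ} {S : Finset (Fin n → Bool)}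
    (hS : S = Finset.univ.filter fun s =>
      (∑ i, (if s i then (1 : ℝ) else -1)) = Real.sqrt n)
    {T₁ T₂ : Finset (Fin n)} (h : T₁.card = T₂.card) : stmt11_FF S T₁ = stmt11_FF S T₂ := by
  obtain ⟨σ, rfl⟩ := stmt11_exists_perm_image h
  exact (stmt11_FF_image hS T₁ σ).symm

private theorem stmt11_recur {n : ℕ} {S : Finset (Fin n → Bool)}
    (hS : S = Finset.univ.filter fun s =>
      (∑ i, (if s i then (1 : ℝ) else -1)) = Real.sqrt n)
    (m : ℕ) (hm : n = m ^ 2) (t : ℕ) (ht : t + 1 ≤ n) :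
    (m : ℝ) * stmt11_FF S (stmt11_Tt n t)
      = t * stmt11_FF S (stmt11_Tt n (t - 1))
        + ((n : ℝ) - t) * stmt11_FF S (stmt11_Tt n (t + 1)) := by
  have hsqrt : Real.sqrt n = m := by
    rw [hm]; push_cast; exact Real.sqrt_sq (by positivity)
  have step1 : (m : ℝ) * stmt11_FF S (stmt11_Tt n t)
      = ∑ s ∈ S, (∑ i, (if s i then (1:ℝ) else -1))
          * ∏ j ∈ stmt11_Tt n t, (if s j then (1:ℝ) else -1) := by
    rw [stmt11_FF, Finset.mul_sum]
    refine Finset.sum_congr rfl fun s hs => ?_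
    have : (∑ i, (if s i then (1:ℝ) else -1)) = Real.sqrt n := by
      rw [hS] at hs; exact (Finset.mem_filter.mp hs).2
    rw [this, hsqrt]
  rw [step1]
  simp_rw [Finset.sum_mul]
  rw [Finset.sum_comm]
  rw [← Finset.sum_filter_add_sum_filter_not Finset.univ (· ∈ stmt11_Tt n t)]
  have hfilt : Finset.univ.filter (· ∈ stmt11_Tt n t) = stmt11_Tt n t := by ext i; simp
  have h1 : ∀ i ∈ stmt11_Tt n t,
      (∑ s ∈ S, (if s i then (1:ℝ) else -1)
          * ∏ j ∈ stmt11_Tt n t, (if s j then (1:ℝ) else -1))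
      = stmt11_FF S (stmt11_Tt n (t-1)) := by
    intro i hi
    have key : ∀ s : Fin n → Bool,
        (if s i then (1:ℝ) else -1) * ∏ j ∈ stmt11_Tt n t, (if s j then (1:ℝ) else -1)
        = ∏ j ∈ (stmt11_Tt n t).erase i, (if s j then (1:ℝ) else -1) := by
      intro s
      rw [← Finset.mul_prod_erase _ _ hi, ← mul_assoc]
      rcases Bool.eq_false_or_eq_true (s i) with h | h <;> simp [h]
    simp_rw [key]
    refine stmt11_FF_card hS ?_
    rw [Finset.card_erase_of_mem hi, stmt11_card_Tt n t (le_trans (Nat.le_succ t) ht),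
      stmt11_card_Tt n (t-1) (le_trans (Nat.sub_le t 1) (le_trans (Nat.le_succ t) ht))]
  have h2 : ∀ i ∈ Finset.univ.filter (· ∉ stmt11_Tt n t),
      (∑ s ∈ S, (if s i then (1:ℝ) else -1)
          * ∏ j ∈ stmt11_Tt n t, (if s j then (1:ℝ) else -1))
      = stmt11_FF S (stmt11_Tt n (t+1)) := by
    intro i hi
    have hi' : i ∉ stmt11_Tt n t := (Finset.mem_filter.mp hi).2
    have key : ∀ s : Fin n → Bool,
        (if s i then (1:ℝ) else -1) * ∏ j ∈ stmt11_Tt n t, (if s j then (1:ℝ) else -1)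
        = ∏ j ∈ insert i (stmt11_Tt n t), (if s j then (1:ℝ) else -1) := by
      intro s; rw [Finset.prod_insert hi']
    simp_rw [key]
    refine stmt11_FF_card hS ?_
    rw [Finset.card_insert_of_notMem hi', stmt11_card_Tt n t (le_trans (Nat.le_succ t) ht),
      stmt11_card_Tt n (t+1) ht]
  rw [hfilt, Finset.sum_congr rfl h1, Finset.sum_congr rfl h2,
    Finset.sum_const, Finset.sum_const, stmt11_card_Tt n t (le_trans (Nat.le_succ t) ht)]
  have hcard : (Finset.univ.filter (· ∉ stmt11_Tt n t)).card = n - t := by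
    have : Finset.univ.filter (· ∉ stmt11_Tt n t) = (stmt11_Tt n t)ᶜ := by ext i; simp
    rw [this, Finset.card_compl, stmt11_card_Tt n t (le_trans (Nat.le_succ t) ht),
      Fintype.card_fin]
  rw [hcard, nsmul_eq_mul, nsmul_eq_mul]
  rw [Nat.cast_sub (le_trans (Nat.le_succ t) ht)]

private theorem stmt11_FF_abs_le {n : ℕ} (S : Finset (Fin n → Bool)) (T : Finset (Fin n)) :
    |stmt11_FF S T| ≤ S.card := by
  unfold stmt11_FF
  calc |∑ s ∈ S, ∏ j ∈ T, (if s j then (1:ℝ) else -1)|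
      ≤ ∑ s ∈ S, |∏ j ∈ T, (if s j then (1:ℝ) else -1)| := Finset.abs_sum_le_sum_abs _ _
    _ = ∑ s ∈ S, (1:ℝ) := by
        refine Finset.sum_congr rfl fun s _ => ?_
        rw [Finset.abs_prod]
        refine Finset.prod_eq_one fun j _ => ?_
        rcases Bool.eq_false_or_eq_true (s j) with h | h <;> simp [h]
    _ = S.card := by simp

private theorem stmt11_nat_ineq (j : ℕ) :
    2 * ((j+1)^(3*j+3) + (j+1) * j^(3*j)) ≤ (j+2)^(3*j+6) := by
  have a1 : (j+1) * j^(3*j) ≤ (j+1)^(3*j+3) := by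
    calc (j+1) * j^(3*j) ≤ (j+1) * (j+1)^(3*j) :=
          Nat.mul_le_mul_left _ (Nat.pow_le_pow_left (Nat.le_succ j) _)
      _ = (j+1)^(3*j+1) := by ring
      _ ≤ (j+1)^(3*j+3) := Nat.pow_le_pow_right (Nat.succ_pos j) (by omega)
  have a2 : (j+2)^(3*j+6) = (j+2)^(3*j+3) * (j+2)^3 := by rw [← pow_add]
  have a3 : (j+1)^(3*j+3) ≤ (j+2)^(3*j+3) := Nat.pow_le_pow_left (by omega) _
  have a4 : 8 ≤ (j+2)^3 := by
    calc (8:ℕ) = 2^3 := by norm_num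
      _ ≤ (j+2)^3 := Nat.pow_le_pow_left (by omega) _
  calc 2 * ((j+1)^(3*j+3) + (j+1) * j^(3*j)) ≤ 2 * ((j+1)^(3*j+3) + (j+1)^(3*j+3)) := by
        exact Nat.mul_le_mul_left _ (Nat.add_le_add_left a1 _)
    _ = 4 * (j+1)^(3*j+3) := by ring
    _ ≤ 8 * (j+1)^(3*j+3) := Nat.mul_le_mul_right _ (by norm_num)
    _ ≤ (j+2)^3 * (j+2)^(3*j+3) := Nat.mul_le_mul a4 a3
    _ = (j+2)^(3*j+6) := by rw [mul_comm, ← pow_add]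

theorem stmt_11 (n k : ℕ) (hk : 1 ≤ k) (hkn : k ≤ n) (hsq : ∃ m : ℕ, n = m ^ 2)
    (S : Finset (Fin n → Bool))
    (hS : S = Finset.univ.filter fun s =>
      (∑ i, (if s i then (1 : ℝ) else -1)) = Real.sqrt n)
    (hne : S.Nonempty) :
    |(∑ s ∈ S, ∏ j ∈ Finset.range k,
        (if hj : j < n then (if s ⟨j, hj⟩ then (1 : ℝ) else -1) else 0)) / S.card|
      ≤ (k : ℝ) ^ (3 * k) / Real.sqrt n ^ k := by
  obtain ⟨m, hm⟩ := hsq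
  have hn1 : 1 ≤ n := le_trans hk hkn
  have hm1 : 1 ≤ m := by
    rcases Nat.eq_zero_or_pos m with h | h
    · subst h; simp at hm; omega
    · exact h
  have hMpos : (0:ℝ) < (m:ℝ) := by exact_mod_cast hm1
  have hsqrt : Real.sqrt n = m := by
    rw [hm]; push_cast; exact Real.sqrt_sq (by positivity)
  have hnM : (n:ℝ) = (m:ℝ)^2 := by rw [hm]; push_cast; ring
  have hcardpos : (0:ℝ) < S.card := by exact_mod_cast Finset.card_pos.mpr hne
  -- main induction
  have main : ∀ K, K ≤ n → |stmt11_FF S (stmt11_Tt n K)| * (m:ℝ)^K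
      ≤ (K:ℝ)^(3*K) * S.card := by
    intro K
    induction K using Nat.strong_induction_on with
    | _ K ih =>
      match K with
      | 0 =>
        intro _
        have hT0 : stmt11_Tt n 0 = ∅ := by
          ext i; simp [stmt11_Tt]
        have : stmt11_FF S (stmt11_Tt n 0) = S.card := by
          rw [hT0]; unfold stmt11_FF; simp
        rw [this]
        simp [abs_of_nonneg hcardpos.le]
      | 1 =>
        intro h1n
        have hrec := stmt11_recur hS m hm 0 h1n
        have hT0 : stmt11_Tt n 0 = ∅ := by ext i; simp [stmt11_Tt]
        have hF0 : stmt11_FF S (stmt11_Tt n 0) = S.card := by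
          rw [hT0]; unfold stmt11_FF; simp
        rw [hF0] at hrec
        simp only [Nat.cast_zero, zero_mul, sub_zero, zero_add] at hrec
        -- hrec : m * card = n * F 1
        have hnpos : (0:ℝ) < (n:ℝ) := by exact_mod_cast hn1
        have hF1 : stmt11_FF S (stmt11_Tt n 1) = (m:ℝ) * S.card / n := by
          field_simp at hrec ⊢
          linarith [hrec]
        rw [hF1]
        rw [hnM]
        rw [abs_of_nonneg (by positivity)]
        rw [pow_one]
        have : (m:ℝ) * S.card / (m:ℝ)^2 * m = S.card := by field_simp
        rw [this]
        norm_num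
      | (j+2) =>
        intro hKn
        set K := j + 2 with hK
        have hle1 : j + 1 ≤ n := by omega
        have hlej : j ≤ n := by omega
        by_cases hcase : m ≤ K^3
        · -- trivial bound
          have habs : |stmt11_FF S (stmt11_Tt n K)| ≤ S.card := stmt11_FF_abs_le S _
          have hpow : (m:ℝ)^K ≤ (K:ℝ)^(3*K) := by
            have : (m:ℝ) ≤ (K:ℝ)^3 := by exact_mod_cast le_trans hcase (le_refl _)
            calc (m:ℝ)^K ≤ ((K:ℝ)^3)^K := by
                  apply pow_le_pow_left₀ hMpos.le this
              _ = (K:ℝ)^(3*K) := by rw [← pow_mul]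
          calc |stmt11_FF S (stmt11_Tt n K)| * (m:ℝ)^K
              ≤ (S.card : ℝ) * (K:ℝ)^(3*K) := by
                apply mul_le_mul habs hpow (by positivity) hcardpos.le
            _ = (K:ℝ)^(3*K) * S.card := by ring
        · -- recursion case: K^3 < m
          push_neg at hcase
          have hrec := stmt11_recur hS m hm (j+1) hKn
          have hj1 : (j + 1 : ℕ) - 1 = j := by omega
          rw [hj1] at hrec
          -- hrec : m * F(j+1) = (j+1) * F j + (n - (j+1)) * F (j+2)
          set F0 := stmt11_FF S (stmt11_Tt n j)
          set F1 := stmt11_FF S (stmt11_Tt n (j+1))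
          set F2 := stmt11_FF S (stmt11_Tt n (j+2))
          set C : ℝ := (n:ℝ) - ((j:ℝ)+1) with hC
          have hrec' : C * F2 = (m:ℝ) * F1 - ((j:ℝ)+1) * F0 := by
            push_cast at hrec
            rw [hC]
            linarith [hrec]
          have ih0 := ih j (by omega) hlej
          have ih1 := ih (j+1) (by omega) hle1
          have hCpos : (0:ℝ) < C := by
            have : (j+1 : ℕ) < n := by omega
            rw [hC]
            have : ((j:ℝ)+1) < (n:ℝ) := by exact_mod_cast this
            linarith
          -- bound C * (|F2| * m^(j+2))
          have step : C * (|F2| * (m:ℝ)^(j+2))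
              ≤ (m:ℝ)^2 * (((j:ℝ)+1)^(3*j+3) + ((j:ℝ)+1) * (j:ℝ)^(3*j)) * S.card := by
            have habs2 : C * |F2| ≤ (m:ℝ) * |F1| + ((j:ℝ)+1) * |F0| := by
              have h1 : |C * F2| = C * |F2| := by
                rw [abs_mul, abs_of_pos hCpos]
              calc C * |F2| = |C * F2| := h1.symm
                _ = |(m:ℝ) * F1 - ((j:ℝ)+1) * F0| := by rw [hrec']
                _ ≤ |(m:ℝ) * F1| + |((j:ℝ)+1) * F0| := abs_sub _ _
                _ = (m:ℝ) * |F1| + ((j:ℝ)+1) * |F0| := by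
                    rw [abs_mul, abs_mul, abs_of_pos hMpos,
                      abs_of_pos (by positivity : (0:ℝ) < (j:ℝ)+1)]
            calc C * (|F2| * (m:ℝ)^(j+2)) = (C * |F2|) * (m:ℝ)^(j+2) := by ring
              _ ≤ ((m:ℝ) * |F1| + ((j:ℝ)+1) * |F0|) * (m:ℝ)^(j+2) := by
                  apply mul_le_mul_of_nonneg_right habs2 (by positivity)
              _ = (m:ℝ)^2 * (|F1| * (m:ℝ)^(j+1)) + (m:ℝ)^2 * (((j:ℝ)+1) * (|F0| * (m:ℝ)^j)) := by
                  ring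
              _ ≤ (m:ℝ)^2 * (((j:ℝ)+1)^(3*(j+1)) * S.card)
                    + (m:ℝ)^2 * (((j:ℝ)+1) * ((j:ℝ)^(3*j) * S.card)) := by
                  have t1 : (m:ℝ)^2 * (|F1| * (m:ℝ)^(j+1))
                      ≤ (m:ℝ)^2 * (((j:ℝ)+1)^(3*(j+1)) * S.card) := by
                    apply mul_le_mul_of_nonneg_left _ (by positivity)
                    exact_mod_cast ih1
                  have t2 : (m:ℝ)^2 * (((j:ℝ)+1) * (|F0| * (m:ℝ)^j))
                      ≤ (m:ℝ)^2 * (((j:ℝ)+1) * ((j:ℝ)^(3*j) * S.card)) := by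
                    apply mul_le_mul_of_nonneg_left _ (by positivity)
                    apply mul_le_mul_of_nonneg_left _ (by positivity)
                    exact_mod_cast ih0
                  linarith
              _ = (m:ℝ)^2 * (((j:ℝ)+1)^(3*j+3) + ((j:ℝ)+1) * (j:ℝ)^(3*j)) * S.card := by
                  have : 3*(j+1) = 3*j+3 := by ring
                  rw [this]; ring
          -- key numeric inequality
          have keyineq : (m:ℝ)^2 * (((j:ℝ)+1)^(3*j+3) + ((j:ℝ)+1) * (j:ℝ)^(3*j))
              ≤ C * ((j:ℝ)+2)^(3*j+6) := by
            have hC2 : (m:ℝ)^2 / 2 ≤ C := by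
              rw [hC, hnM]
              have hcase' : (j+2)^3 < m := hcase
              have h8' : 8 ≤ (j+2)^3 := by
                calc (8:ℕ) = 2^3 := by norm_num
                  _ ≤ (j+2)^3 := Nat.pow_le_pow_left (by omega) 3
              have hm9n : 9 ≤ m := Nat.lt_of_le_of_lt h8' hcase'
              have hj1m : j + 1 < m :=
                Nat.lt_of_le_of_lt
                  (le_trans (by omega) (Nat.le_self_pow (by norm_num) (j+2))) hcase'
              have hm9 : (9:ℝ) ≤ (m:ℝ) := by exact_mod_cast hm9n
              have hjm : ((j:ℝ)+1) ≤ (m:ℝ) := by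
                have : j + 1 ≤ m := le_of_lt hj1m
                exact_mod_cast this
              have hm2 : 9*(m:ℝ) ≤ (m:ℝ)^2 := by
                rw [sq]
                exact mul_le_mul_of_nonneg_right hm9 hMpos.le
              linarith
            have hnat : (2:ℝ) * (((j:ℝ)+1)^(3*j+3) + ((j:ℝ)+1) * (j:ℝ)^(3*j))
                ≤ ((j:ℝ)+2)^(3*j+6) := by
              have := stmt11_nat_ineq j
              have : ((2 * ((j+1)^(3*j+3) + (j+1) * j^(3*j)) : ℕ) : ℝ)
                  ≤ (((j+2)^(3*j+6) : ℕ) : ℝ) := by exact_mod_cast this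
              push_cast at this
              linarith
            have hpos : (0:ℝ) ≤ ((j:ℝ)+1)^(3*j+3) + ((j:ℝ)+1) * (j:ℝ)^(3*j) := by positivity
            calc (m:ℝ)^2 * (((j:ℝ)+1)^(3*j+3) + ((j:ℝ)+1) * (j:ℝ)^(3*j))
                = ((m:ℝ)^2 / 2) * (2 * (((j:ℝ)+1)^(3*j+3) + ((j:ℝ)+1) * (j:ℝ)^(3*j))) := by
                  ring
              _ ≤ C * ((j:ℝ)+2)^(3*j+6) := by
                  apply mul_le_mul hC2 hnat (by positivity) hCpos.le
          have final : C * (|F2| * (m:ℝ)^(j+2)) ≤ C * (((j:ℝ)+2)^(3*j+6) * S.card) := by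
            calc C * (|F2| * (m:ℝ)^(j+2))
                ≤ (m:ℝ)^2 * (((j:ℝ)+1)^(3*j+3) + ((j:ℝ)+1) * (j:ℝ)^(3*j)) * S.card := step
              _ ≤ C * ((j:ℝ)+2)^(3*j+6) * S.card := by
                  apply mul_le_mul_of_nonneg_right keyineq hcardpos.le
              _ = C * (((j:ℝ)+2)^(3*j+6) * S.card) := by ring
          have := le_of_mul_le_mul_left final hCpos
          have hexp : 3*(j+2) = 3*j+6 := by ring
          have hcast : ((K:ℕ):ℝ)^(3*K) = ((j:ℝ)+2)^(3*j+6) := by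
            rw [hK, hexp]; push_cast; rfl
          rw [hcast]
          exact this
  -- assemble the final statement
  have hprod : (∑ s ∈ S, ∏ j ∈ Finset.range k,
        (if hj : j < n then (if s ⟨j, hj⟩ then (1 : ℝ) else -1) else 0))
      = stmt11_FF S (stmt11_Tt n k) := by
    unfold stmt11_FF
    refine Finset.sum_congr rfl fun s _ => ?_
    refine Finset.prod_nbij' (i := fun j => if hj : j < n then (⟨j, hj⟩ : Fin n) else ⟨0, hn1⟩)
        (j := fun i => i.val) ?_ ?_ ?_ ?_ ?_
    · intro a ha
      have han : a < n := lt_of_lt_of_le (Finset.mem_range.mp ha) hkn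
      simp only [dif_pos han, stmt11_Tt, Finset.mem_filter, Finset.mem_univ, true_and]
      exact Finset.mem_range.mp ha
    · intro i hi
      simp only [stmt11_Tt, Finset.mem_filter] at hi
      exact Finset.mem_range.mpr hi.2
    · intro a ha
      have han : a < n := lt_of_lt_of_le (Finset.mem_range.mp ha) hkn
      simp [dif_pos han]
    · intro i hi
      simp [i.isLt]
    · intro a ha
      have han : a < n := lt_of_lt_of_le (Finset.mem_range.mp ha) hkn
      simp [dif_pos han]
  rw [hprod, abs_div, Nat.abs_cast, div_le_div_iff₀ hcardpos (by positivity), hsqrt]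
  exact main k hkn
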